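/- arXiv:1410.3314 — 2 statements merged into one kernel-verified Lean document; each statement's English description precedes it below -/
import Mathlib

section
/- Let h(x) = ⌊(v·x + b)/w⌋ where v ∈ ℝ^d is fixed, w > 0, and b is uniformly distributed on [0,w]. Then for any x, x' ∈ ℝ^d with c = |v·(x − x')| the probability over b that h(x) ≠ h(x') equals min(c/w, 1). -/
open MeasureTheory


lemma floor_ne_iff_exists (s t : ℝ) (h : t ≤ s) :
    ⌊s⌋ ≠ ⌊t⌋ ↔ ∃ n : ℤ, t < n ∧ (n : ℝ) ≤ s := by
  constructor
  · intro hne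
    have hlt : ⌊t⌋ < ⌊s⌋ := lt_of_le_of_ne (Int.floor_le_floor h) (Ne.symm hne)
    refine ⟨⌊t⌋ + 1, ?_, ?_⟩
    · exact_mod_cast Int.lt_floor_add_one t
    · have h2 : ((⌊t⌋ + 1 : ℤ) : ℝ) ≤ (⌊s⌋ : ℝ) := by exact_mod_cast hlt
      exact h2.trans (Int.floor_le s)
  · rintro ⟨n, h1, h2⟩
    have ha : ⌊t⌋ < n := Int.floor_lt.2 h1
    have hb : n ≤ ⌊s⌋ := Int.le_floor.2 h2
    omega

lemma lsh_core (A B w : ℝ) (hw : 0 < w) (hBA : B ≤ A) :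
    (volume {b ∈ Set.Icc (0 : ℝ) w | ⌊(A + b) / w⌋ ≠ ⌊(B + b) / w⌋}).toReal
      = min (A - B) w := by
  have hP : ∀ b : ℝ, (⌊(A + b) / w⌋ ≠ ⌊(B + b) / w⌋ ↔
      ∃ n : ℤ, (n : ℝ) * w - A ≤ b ∧ b < (n : ℝ) * w - B) := by
    intro b
    rw [floor_ne_iff_exists _ _ (div_le_div_of_nonneg_right (by linarith) hw.le)]
    constructor
    · rintro ⟨n, h1, h2⟩
      rw [le_div_iff₀ hw] at h2
      rw [div_lt_iff₀ hw] at h1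
      exact ⟨n, by linarith, by linarith⟩
    · rintro ⟨n, h1, h2⟩
      refine ⟨n, ?_, ?_⟩
      · rw [div_lt_iff₀ hw]; linarith
      · rw [le_div_iff₀ hw]; linarith
  rcases le_or_gt w (A - B) with hcw | hcw
  · have hall : {b ∈ Set.Icc (0 : ℝ) w | ⌊(A + b) / w⌋ ≠ ⌊(B + b) / w⌋}
        = Set.Icc (0 : ℝ) w := by
      ext b
      simp only [Set.mem_setOf_eq, Set.mem_Icc, and_iff_left_iff_imp]
      intro hb
      rw [hP]
      refine ⟨⌊(B + b) / w⌋ + 1, ?_, ?_⟩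
      · have h1 := Int.floor_le ((B + b) / w)
        rw [le_div_iff₀ hw] at h1
        push_cast
        have h2 : ((⌊(B + b) / w⌋ : ℝ) + 1) * w = (⌊(B + b) / w⌋ : ℝ) * w + w := by ring
        linarith
      · have h1 := Int.lt_floor_add_one ((B + b) / w)
        rw [div_lt_iff₀ hw] at h1
        push_cast
        linarith
    rw [hall, min_eq_right hcw, Real.volume_Icc, ENNReal.toReal_ofReal (by linarith)]
    ring
  · set m : ℤ := ⌊B / w⌋ + 1 with hm
    have hBm : B < (m : ℝ) * w := by
      have h1 := Int.lt_floor_add_one (B / w)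
      rw [div_lt_iff₀ hw] at h1
      rw [hm]
      push_cast
      linarith
    have hmB : (m : ℝ) * w ≤ B + w := by
      have h1 := Int.floor_le (B / w)
      rw [le_div_iff₀ hw] at h1
      rw [hm]
      push_cast
      have h2 : ((⌊B / w⌋ : ℝ) + 1) * w = (⌊B / w⌋ : ℝ) * w + w := by ring
      linarith
    have hS : {b ∈ Set.Icc (0 : ℝ) w | ⌊(A + b) / w⌋ ≠ ⌊(B + b) / w⌋}
        = Set.Ico (max 0 ((m : ℝ) * w - A)) ((m : ℝ) * w - B)
          ∪ Set.Icc (((m : ℝ) + 1) * w - A) w := by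
      ext b
      simp only [Set.mem_setOf_eq, Set.mem_Icc, Set.mem_union, Set.mem_Ico, max_le_iff]
      constructor
      · rintro ⟨⟨hb0, hbw⟩, hne⟩
        rw [hP] at hne
        obtain ⟨n, h1, h2⟩ := hne
        have hnm : m ≤ n := by
          have hx : B / w < (n : ℝ) := by rw [div_lt_iff₀ hw]; nlinarith
          have := Int.floor_lt.2 hx
          omega
        have hnm2 : n ≤ m + 1 := by
          have hx : (n : ℝ) * w < ((m : ℝ) + 2) * w := by nlinarith
          have hy : (n : ℝ) < (m : ℝ) + 2 := lt_of_mul_lt_mul_right hx hw.le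
          have : n < m + 2 := by exact_mod_cast hy
          omega
        rcases eq_or_lt_of_le hnm with heq | hlt
        · left
          subst heq
          exact ⟨⟨hb0, h1⟩, h2⟩
        · right
          have hn1 : n = m + 1 := by omega
          subst hn1
          constructor
          · push_cast at h1; linarith
          · exact hbw
      · rintro (⟨⟨hb0, hbA⟩, h2⟩ | ⟨h1, h2⟩)
        · refine ⟨⟨hb0, by linarith⟩, ?_⟩
          rw [hP]
          exact ⟨m, hbA, h2⟩
        · refine ⟨⟨by nlinarith, h2⟩, ?_⟩
          rw [hP]
          refine ⟨m + 1, by push_cast; linarith, by push_cast; nlinarith⟩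
    rw [hS]
    have hdisj : Disjoint (Set.Ico (max 0 ((m : ℝ) * w - A)) ((m : ℝ) * w - B))
        (Set.Icc (((m : ℝ) + 1) * w - A) w) := by
      rw [Set.disjoint_left]
      rintro b ⟨_, h2⟩ ⟨h3, _⟩
      nlinarith
    rw [measure_union hdisj measurableSet_Icc, Real.volume_Ico, Real.volume_Icc,
      ENNReal.toReal_add ENNReal.ofReal_ne_top ENNReal.ofReal_ne_top,
      ENNReal.toReal_ofReal', ENNReal.toReal_ofReal']
    rcases le_total A ((m : ℝ) * w) with h | h
    · rw [max_eq_right (by linarith : (0:ℝ) ≤ (m : ℝ) * w - A),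
        min_eq_left (by linarith : A - B ≤ w)]
      rw [max_eq_left (by linarith), max_eq_right (by linarith)]
      ring
    · rw [max_eq_left (by linarith : (m : ℝ) * w - A ≤ 0),
        min_eq_left (by linarith : A - B ≤ w)]
      rw [max_eq_left (by linarith), max_eq_left (by linarith)]
      ring

/-- For the hash `h_b(x) = ⌊(v·x + b)/w⌋` with fixed `v ∈ ℝ^d`, `w > 0`, and `b`
uniformly distributed on `[0,w]`, the probability (over `b`) that `h_b(x) ≠ h_b(x')`
equals `min(c/w, 1)`, where `c = |v·(x − x')|`. -/
theorem lsh_floor_hash_separation_probability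
    (d : ℕ) (v : Fin d → ℝ) (w : ℝ) (hw : 0 < w) (x x' : Fin d → ℝ)
    (c : ℝ) (hc : c = |∑ i, v i * (x i - x' i)|) :
    (volume {b ∈ Set.Icc (0 : ℝ) w |
        ⌊((∑ i, v i * x i) + b) / w⌋ ≠ ⌊((∑ i, v i * x' i) + b) / w⌋}).toReal / w
      = min (c / w) 1 := by
  set A := ∑ i, v i * x i with hA
  set B := ∑ i, v i * x' i with hB
  have hsum : ∑ i, v i * (x i - x' i) = A - B := by
    rw [hA, hB, ← Finset.sum_sub_distrib]
    congr 1
    ext i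
    ring
  rw [hsum] at hc
  have key : (volume {b ∈ Set.Icc (0 : ℝ) w |
      ⌊(A + b) / w⌋ ≠ ⌊(B + b) / w⌋}).toReal = min c w := by
    rcases le_total B A with hBA | hAB
    · rw [lsh_core A B w hw hBA, hc, abs_of_nonneg (by linarith)]
    · have hswap : {b ∈ Set.Icc (0 : ℝ) w | ⌊(A + b) / w⌋ ≠ ⌊(B + b) / w⌋}
          = {b ∈ Set.Icc (0 : ℝ) w | ⌊(B + b) / w⌋ ≠ ⌊(A + b) / w⌋} := by
        ext b
        simp [ne_comm]
      rw [hswap, lsh_core B A w hw hAB, hc, abs_sub_comm, abs_of_nonneg (by linarith)]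
  rw [key]
  rcases le_total c w with h | h
  · rw [min_eq_left h, min_eq_left (by rw [div_le_one hw]; exact h)]
  · rw [min_eq_right h, min_eq_right (by rw [le_div_iff₀ hw]; linarith), div_self hw.ne']
end

section
/- For the hash function h(x) = ⌊(v·x + b)/w⌋ with v a vector of i.i.d. standard Gaussian entries and b uniform on [0,w], the collision probability Pr(h(x) = h(x')) is a monotonically decreasing function of ‖x − x'‖_2; in particular if ‖x − x'‖_2 = 0 then the collision probability is 1. -/
open MeasureTheory ProbabilityTheory
open scoped ENNReal NNReal

namespace GaussLSH

lemma measurableSet_eq_int {α : Type*} [MeasurableSpace α] {F G : α → ℤ}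
    (hF : Measurable F) (hG : Measurable G) : MeasurableSet {a | F a = G a} := by
  have h : {a | F a = G a} = ⋃ n : ℤ, F ⁻¹' {n} ∩ G ⁻¹' {n} := by
    ext a
    simp only [Set.mem_setOf_eq, Set.mem_iUnion, Set.mem_inter_iff, Set.mem_preimage,
      Set.mem_singleton_iff]
    exact ⟨fun h => ⟨G a, h, rfl⟩, fun ⟨n, h1, h2⟩ => h1.trans h2.symm⟩
  rw [h]
  exact MeasurableSet.iUnion fun n => (hF (measurableSet_singleton n)).inter
    (hG (measurableSet_singleton n))

noncomputable def D2 : ℝ × ℝ → ℝ≥0∞ := fun p => gaussianPDF 0 1 p.1 * gaussianPDF 0 1 p.2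

lemma measurable_D2 : Measurable D2 :=
  ((measurable_gaussianPDF 0 1).comp measurable_fst).mul
    ((measurable_gaussianPDF 0 1).comp measurable_snd)

lemma prod_std_withDensity :
    (gaussianReal 0 1).prod (gaussianReal 0 1)
      = (volume : Measure (ℝ × ℝ)).withDensity D2 :=
  Measure.prod_eq fun s t hs ht => by
    rw [withDensity_apply _ (hs.prod ht), Measure.volume_eq_prod, ← Measure.prod_restrict]
    rw [show D2 = fun p : ℝ × ℝ => gaussianPDF 0 1 p.1 * gaussianPDF 0 1 p.2 from rfl]
    rw [lintegral_prod_mul (measurable_gaussianPDF 0 1).aemeasurable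
        (measurable_gaussianPDF 0 1).aemeasurable,
      ← gaussianReal_apply 0 one_ne_zero s, ← gaussianReal_apply 0 one_ne_zero t]

lemma D2_rot {a b : ℝ} (hab : a ^ 2 + b ^ 2 = 1) (p : ℝ × ℝ) :
    D2 (a * p.1 + b * p.2, -b * p.1 + a * p.2) = D2 p := by
  have key : (a * p.1 + b * p.2) ^ 2 + (-b * p.1 + a * p.2) ^ 2 = p.1 ^ 2 + p.2 ^ 2 := by
    nlinarith [hab, sq_nonneg p.1, sq_nonneg p.2]
  simp only [D2, gaussianPDF, ← ENNReal.ofReal_mul (gaussianPDFReal_nonneg _ _ _)]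
  congr 1
  simp only [gaussianPDFReal, sub_zero, NNReal.coe_one, mul_one]
  have hexp : Real.exp (-(a * p.1 + b * p.2) ^ 2 / 2) *
        Real.exp (-(-b * p.1 + a * p.2) ^ 2 / 2)
      = Real.exp (-p.1 ^ 2 / 2) * Real.exp (-p.2 ^ 2 / 2) := by
    rw [← Real.exp_add, ← Real.exp_add]
    congr 1
    linarith [key]
  have hmm : ∀ e f : ℝ, (Real.sqrt (2 * Real.pi))⁻¹ * Real.exp e *
        ((Real.sqrt (2 * Real.pi))⁻¹ * Real.exp f)
      = (Real.sqrt (2 * Real.pi))⁻¹ * (Real.sqrt (2 * Real.pi))⁻¹ *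
        (Real.exp e * Real.exp f) := fun e f => by ring
  rw [hmm, hmm, hexp]

lemma rot_measurable (a b : ℝ) :
    Measurable (fun p : ℝ × ℝ => (a * p.1 + b * p.2, -b * p.1 + a * p.2)) :=
  ((measurable_fst.const_mul a).add (measurable_snd.const_mul b)).prod
    ((measurable_fst.const_mul (-b)).add (measurable_snd.const_mul a))

lemma rot_measurePreserving {a b : ℝ} (hab : a ^ 2 + b ^ 2 = 1) :
    MeasurePreserving (fun p : ℝ × ℝ => (a * p.1 + b * p.2, -b * p.1 + a * p.2))
      volume volume := by
  have hHaar : Measure.IsAddHaarMeasure (volume : Measure (ℝ × ℝ)) := by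
    rw [Measure.volume_eq_prod]; infer_instance
  set L := Matrix.toLin (Module.Basis.finTwoProd ℝ) (Module.Basis.finTwoProd ℝ) !![a, b; -b, a] with hL
  have hdet : LinearMap.det L = 1 := by
    rw [hL, LinearMap.det_toLin, Matrix.det_fin_two_of]
    linear_combination hab
  have happ : (fun p : ℝ × ℝ => (a * p.1 + b * p.2, -b * p.1 + a * p.2)) = ⇑L := by
    funext p
    rw [hL, Matrix.toLin_finTwoProd_apply]
  refine ⟨happ ▸ rot_measurable a b, ?_⟩
  rw [happ, Measure.map_linearMap_addHaar_eq_smul_addHaar volume (by rw [hdet]; norm_num)]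
  rw [hdet]
  norm_num

lemma map_rot {a b : ℝ} (hab : a ^ 2 + b ^ 2 = 1) :
    ((gaussianReal 0 1).prod (gaussianReal 0 1)).map
        (fun p : ℝ × ℝ => (a * p.1 + b * p.2, -b * p.1 + a * p.2))
      = (gaussianReal 0 1).prod (gaussianReal 0 1) := by
  set R := fun p : ℝ × ℝ => (a * p.1 + b * p.2, -b * p.1 + a * p.2) with hR
  have hRm : Measurable R := rot_measurable a b
  ext s hs
  rw [Measure.map_apply hRm hs, prod_std_withDensity, withDensity_apply _ (hRm hs),
    withDensity_apply _ hs]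
  calc ∫⁻ p in R ⁻¹' s, D2 p ∂volume
      = ∫⁻ p in R ⁻¹' s, D2 (R p) ∂volume :=
        setLIntegral_congr_fun (hRm hs)
          (fun p _ => (D2_rot hab p).symm)
    _ = ∫⁻ p, (R ⁻¹' s).indicator (fun q => D2 (R q)) p ∂volume :=
        (lintegral_indicator (hRm hs) _).symm
    _ = ∫⁻ p, s.indicator D2 (R p) ∂volume :=
        lintegral_congr fun p => by
          by_cases hp : R p ∈ s <;> simp [Set.indicator, hp, Set.mem_preimage]
    _ = ∫⁻ q, s.indicator D2 q ∂volume :=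
        (rot_measurePreserving hab).lintegral_comp (measurable_D2.indicator hs)
    _ = ∫⁻ p in s, D2 p ∂volume := lintegral_indicator hs _

lemma map_lin_comb_unit {a b : ℝ} (hab : a ^ 2 + b ^ 2 = 1) :
    ((gaussianReal 0 1).prod (gaussianReal 0 1)).map (fun p : ℝ × ℝ => a * p.1 + b * p.2)
      = gaussianReal 0 1 := by
  have h : (fun p : ℝ × ℝ => a * p.1 + b * p.2)
      = Prod.fst ∘ (fun p : ℝ × ℝ => (a * p.1 + b * p.2, -b * p.1 + a * p.2)) := rfl
  rw [h, ← Measure.map_map measurable_fst (rot_measurable a b), map_rot hab,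
    Measure.map_fst_prod]
  simp

lemma map_lin_comb (a b : ℝ) :
    ((gaussianReal 0 1).prod (gaussianReal 0 1)).map (fun p : ℝ × ℝ => a * p.1 + b * p.2)
      = gaussianReal 0 ⟨a ^ 2 + b ^ 2, by positivity⟩ := by
  rcases eq_or_ne (a ^ 2 + b ^ 2) 0 with h0 | hne
  · have ha : a = 0 := by nlinarith [sq_nonneg a, sq_nonneg b]
    have hb : b = 0 := by nlinarith [sq_nonneg a, sq_nonneg b]
    subst ha; subst hb
    have hv : (⟨(0:ℝ) ^ 2 + (0:ℝ) ^ 2, by positivity⟩ : ℝ≥0) = (0 : ℝ≥0) := by ext; norm_num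
    rw [hv, gaussianReal_zero_var]
    have hc : (fun p : ℝ × ℝ => (0:ℝ) * p.1 + (0:ℝ) * p.2) = fun _ => (0:ℝ) := by
      funext p; ring
    rw [hc, Measure.map_const]
    simp
  · set r := Real.sqrt (a ^ 2 + b ^ 2) with hr
    have hpos : 0 < a ^ 2 + b ^ 2 := lt_of_le_of_ne (by positivity) (Ne.symm hne)
    have hrpos : 0 < r := Real.sqrt_pos.mpr hpos
    have hr2 : r ^ 2 = a ^ 2 + b ^ 2 := Real.sq_sqrt hpos.le
    have hunit : (a / r) ^ 2 + (b / r) ^ 2 = 1 := by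
      field_simp
      rw [hr2]
    have hf : (fun p : ℝ × ℝ => a * p.1 + b * p.2)
        = (r * ·) ∘ (fun p : ℝ × ℝ => (a / r) * p.1 + (b / r) * p.2) := by
      funext p
      simp only [Function.comp_apply]
      field_simp
      try ring
    rw [hf, ← Measure.map_map (f := fun p : ℝ × ℝ => (a / r) * p.1 + (b / r) * p.2) (measurable_const_mul r)
        ((measurable_fst.const_mul _).add (measurable_snd.const_mul _)),
      map_lin_comb_unit hunit, gaussianReal_map_const_mul]
    congr 1
    · simp
    · rw [mul_one]
      ext
      exact hr2
lemma pi_map_lin : ∀ (n : ℕ) (a : Fin n → ℝ),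
    (Measure.pi fun _ : Fin n => gaussianReal 0 1).map (fun v => ∑ i, v i * a i)
      = gaussianReal 0 ⟨∑ i, a i ^ 2, by positivity⟩ := by
  intro n
  induction n with
  | zero =>
    intro a
    have h : (fun v : Fin 0 → ℝ => ∑ i, v i * a i) = fun _ => (0 : ℝ) := by
      funext v; simp
    have hv : (⟨∑ i : Fin 0, a i ^ 2, by positivity⟩ : ℝ≥0) = (0 : ℝ≥0) := by ext; simp
    rw [h, hv, gaussianReal_zero_var, Measure.map_const]
    simp
  | succ n ih =>
    intro a
    have hmp := measurePreserving_piFinSuccAbove (fun _ : Fin (n + 1) => gaussianReal 0 1) 0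
    set e := MeasurableEquiv.piFinSuccAbove (fun _ : Fin (n + 1) => ℝ) 0 with he
    set S : (Fin n → ℝ) → ℝ := fun y => ∑ i, y i * a i.succ with hS
    set G : ℝ × (Fin n → ℝ) → ℝ := fun q => a 0 * q.1 + S q.2 with hG
    have hSm : Measurable S :=
      Finset.measurable_sum _ fun i _ => (measurable_pi_apply i).mul_const _
    have hGm : Measurable G := (measurable_fst.const_mul _).add (hSm.comp measurable_snd)
    have heapp : ∀ v : Fin (n + 1) → ℝ, e v = (v 0, fun i => v i.succ) := by
      intro v
      simp [he, MeasurableEquiv.piFinSuccAbove, Fin.removeNth, Fin.zero_succAbove]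
      exact funext fun i => rfl
    have hTe : (fun v : Fin (n + 1) → ℝ => ∑ i, v i * a i) = G ∘ e := by
      funext v
      simp only [Function.comp_apply, heapp v, hG, hS]
      rw [Fin.sum_univ_succ]
      ring
    rw [hTe, ← Measure.map_map hGm e.measurable, hmp.map_eq]
    set σ : ℝ := Real.sqrt (∑ i : Fin n, a i.succ ^ 2) with hσ
    have hσ2 : σ ^ 2 = ∑ i : Fin n, a i.succ ^ 2 := Real.sq_sqrt (by positivity)
    have hSmap : (Measure.pi fun _ : Fin n => gaussianReal 0 1).map S
        = (gaussianReal 0 1).map (σ * ·) := by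
      rw [ih (fun i => a i.succ), gaussianReal_map_const_mul]
      congr 1
      · simp
      · rw [mul_one]
        ext
        exact hσ2.symm
    have h2Dm : Measurable (fun p : ℝ × ℝ => a 0 * p.1 + 1 * p.2) :=
      (measurable_fst.const_mul _).add (measurable_snd.const_mul 1)
    have h1 : G = (fun p : ℝ × ℝ => a 0 * p.1 + 1 * p.2) ∘
        (Prod.map (id : ℝ → ℝ) S) := by
      funext q
      simp [hG, Prod.map, one_mul]
    have hforward : (gaussianReal 0 1).prod ((gaussianReal 0 1).map (σ * ·))
        = ((gaussianReal 0 1).prod (gaussianReal 0 1)).map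
            (Prod.map (id : ℝ → ℝ) (σ * ·)) := by
      rw [← Measure.map_prod_map _ _ measurable_id (measurable_const_mul σ), Measure.map_id]
    rw [h1, ← Measure.map_map h2Dm (measurable_id.prodMap hSm),
      ← Measure.map_prod_map _ _ measurable_id hSm, Measure.map_id, hSmap, hforward,
      Measure.map_map h2Dm (measurable_id.prodMap (measurable_const_mul σ))]
    have h2 : (fun p : ℝ × ℝ => a 0 * p.1 + 1 * p.2) ∘ (Prod.map (id : ℝ → ℝ) (σ * ·))
        = fun p : ℝ × ℝ => a 0 * p.1 + σ * p.2 := by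
      funext p
      simp [Prod.map, one_mul]
    rw [h2, map_lin_comb (a 0) σ]
    congr 1
    ext
    change a 0 ^ 2 + σ ^ 2 = ∑ i, a i ^ 2
    rw [hσ2, Fin.sum_univ_succ]
lemma floor_eq_floor_iff {y τ : ℝ} (hτ : 0 ≤ τ) :
    ⌊y⌋ = ⌊y + τ⌋ ↔ Int.fract y < 1 - τ := by
  have hfr : Int.fract y = y - ⌊y⌋ := (Int.self_sub_floor y).symm
  constructor
  · intro h
    have h2 : y + τ < ⌊y + τ⌋ + 1 := Int.lt_floor_add_one _
    rw [← h] at h2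
    linarith
  · intro h
    have h1 : ⌊y⌋ ≤ ⌊y + τ⌋ := Int.floor_le_floor (by linarith)
    have h2 : ⌊y + τ⌋ ≤ ⌊y⌋ := Int.floor_le_iff.mpr (by linarith)
    omega

lemma fract_lt_volume (w : ℝ) (hw : 0 < w) (a β : ℝ) (hβ : β ≤ 1) :
    volume ({b : ℝ | Int.fract (a + b / w) < β} ∩ Set.Icc 0 w)
      = ENNReal.ofReal (w * max 0 β) := by
  rcases le_or_gt β 0 with hβ0 | hβ0
  · have hempty : {b : ℝ | Int.fract (a + b / w) < β} = ∅ := by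
      ext b
      simp only [Set.mem_setOf_eq, Set.mem_empty_iff_false, iff_false, not_lt]
      exact le_trans hβ0 (Int.fract_nonneg _)
    rw [hempty, Set.empty_inter, measure_empty, max_eq_left hβ0, mul_zero,
      ENNReal.ofReal_zero]
  · set α := Int.fract a with hα
    have hα0 : 0 ≤ α := Int.fract_nonneg a
    have hα1 : α < 1 := Int.fract_lt_one a
    have hfr : ∀ b : ℝ, Int.fract (a + b / w) = Int.fract (α + b / w) := by
      intro b
      have h2 : a + b / w = (⌊a⌋ : ℝ) + (α + b / w) := by
        have h3 := Int.floor_add_fract a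
        rw [hα]
        linarith
      rw [h2, Int.fract_intCast_add]
    have hsetα : {b : ℝ | Int.fract (a + b / w) < β}
        = {b : ℝ | Int.fract (α + b / w) < β} := by
      ext b; rw [Set.mem_setOf_eq, Set.mem_setOf_eq, hfr b]
    -- replace Icc by Ico
    have hIcc : volume ({b : ℝ | Int.fract (α + b / w) < β} ∩ Set.Icc 0 w)
        = volume ({b : ℝ | Int.fract (α + b / w) < β} ∩ Set.Ico 0 w) := by
      apply le_antisymm
      · calc volume ({b : ℝ | Int.fract (α + b / w) < β} ∩ Set.Icc 0 w)
            ≤ volume (({b : ℝ | Int.fract (α + b / w) < β} ∩ Set.Ico 0 w) ∪ {w}) := by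
              apply measure_mono
              rintro b ⟨hb1, hb2, hb3⟩
              rcases lt_or_eq_of_le hb3 with hlt | heq
              · exact Or.inl ⟨hb1, hb2, hlt⟩
              · exact Or.inr (by simp [heq])
          _ ≤ volume ({b : ℝ | Int.fract (α + b / w) < β} ∩ Set.Ico 0 w) + volume {w} :=
              measure_union_le _ _
          _ = volume ({b : ℝ | Int.fract (α + b / w) < β} ∩ Set.Ico 0 w) := by
              simp
      · exact measure_mono (Set.inter_subset_inter_right _ Set.Ico_subset_Icc_self)
    have hset : {b : ℝ | Int.fract (α + b / w) < β} ∩ Set.Ico 0 w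
        = Set.Ico (0 : ℝ) (min ((1 - α) * w) ((β - α) * w))
          ∪ Set.Ico ((1 - α) * w) (min w ((1 + β - α) * w)) := by
      ext b
      simp only [Set.mem_inter_iff, Set.mem_setOf_eq, Set.mem_Ico, Set.mem_union, lt_min_iff]
      constructor
      · rintro ⟨hfb, hb0, hbw⟩
        rcases lt_or_ge b ((1 - α) * w) with hcase | hcase
        · left
          have hbw1 : b / w < 1 - α := (div_lt_iff₀ hw).mpr hcase
          have hself : Int.fract (α + b / w) = α + b / w :=
            Int.fract_eq_self.mpr
              ⟨add_nonneg hα0 (div_nonneg hb0 hw.le), by linarith⟩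
          rw [hself] at hfb
          exact ⟨hb0, hcase, (div_lt_iff₀ hw).mp (by linarith)⟩
        · right
          have h1 : 1 - α ≤ b / w := (le_div_iff₀ hw).mpr hcase
          have h2 : b / w < 1 := (div_lt_one hw).mpr hbw
          have hfr2 : Int.fract (α + b / w) = α + b / w - 1 := by
            have hin : Int.fract (α + b / w - 1) = α + b / w - 1 :=
              Int.fract_eq_self.mpr ⟨by linarith, by linarith⟩
            calc Int.fract (α + b / w) = Int.fract (α + b / w - 1 + 1) := by norm_num
              _ = Int.fract (α + b / w - 1) := Int.fract_add_one _
              _ = α + b / w - 1 := hin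
          rw [hfr2] at hfb
          exact ⟨hcase, hbw, (div_lt_iff₀ hw).mp (by linarith)⟩
      · rintro (⟨hb0, hb1, hb2⟩ | ⟨hb1, hbw, hb2⟩)
        · have hbw' : b < w := lt_of_lt_of_le hb1 (by nlinarith)
          have hc : b / w < 1 - α := (div_lt_iff₀ hw).mpr hb1
          have hself : Int.fract (α + b / w) = α + b / w :=
            Int.fract_eq_self.mpr
              ⟨add_nonneg hα0 (div_nonneg hb0 hw.le), by linarith⟩
          have hd : b / w < β - α := (div_lt_iff₀ hw).mpr hb2
          exact ⟨by rw [hself]; linarith, hb0, hbw'⟩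
        · have hb0 : 0 ≤ b := le_trans (by nlinarith) hb1
          have h1 : 1 - α ≤ b / w := (le_div_iff₀ hw).mpr hb1
          have h2 : b / w < 1 := (div_lt_one hw).mpr hbw
          have hfr2 : Int.fract (α + b / w) = α + b / w - 1 := by
            have hin : Int.fract (α + b / w - 1) = α + b / w - 1 :=
              Int.fract_eq_self.mpr ⟨by linarith, by linarith⟩
            calc Int.fract (α + b / w) = Int.fract (α + b / w - 1 + 1) := by norm_num
              _ = Int.fract (α + b / w - 1) := Int.fract_add_one _
              _ = α + b / w - 1 := hin
          have hd : b / w < 1 + β - α := (div_lt_iff₀ hw).mpr hb2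
          exact ⟨by rw [hfr2]; linarith, hb0, hbw⟩
    have hdisj : Disjoint (Set.Ico (0 : ℝ) (min ((1 - α) * w) ((β - α) * w)))
        (Set.Ico ((1 - α) * w) (min w ((1 + β - α) * w))) := by
      apply Set.disjoint_left.mpr
      rintro b ⟨hb0, hb1⟩ ⟨hb2, hb3⟩
      exact absurd (lt_of_lt_of_le hb1 (min_le_left _ _)) (not_lt.mpr hb2)
    rw [hsetα, hIcc, hset, measure_union hdisj measurableSet_Ico, Real.volume_Ico,
      Real.volume_Ico]
    rcases le_or_gt α β with hc | hc
    · have h1 : min ((1 - α) * w) ((β - α) * w) = (β - α) * w :=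
        min_eq_right (by nlinarith)
      have h2 : min w ((1 + β - α) * w) = w := min_eq_left (by nlinarith)
      rw [h1, h2, max_eq_right hβ0.le,
        ← ENNReal.ofReal_add (by nlinarith) (by nlinarith)]
      congr 1
      ring
    · have h1 : min ((1 - α) * w) ((β - α) * w) = (β - α) * w :=
        min_eq_right (by nlinarith)
      have h2 : min w ((1 + β - α) * w) = (1 + β - α) * w := min_eq_right (by nlinarith)
      have h3 : ENNReal.ofReal ((β - α) * w - 0) = 0 := by
        rw [ENNReal.ofReal_eq_zero]
        nlinarith
      rw [h1, h2, h3, zero_add, max_eq_right hβ0.le]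
      congr 1
      ring

lemma b_section (w : ℝ) (hw : 0 < w) (s s' : ℝ) :
    (ENNReal.ofReal w⁻¹ • volume.restrict (Set.Icc (0 : ℝ) w))
      {b : ℝ | ⌊(s + b) / w⌋ = ⌊(s' + b) / w⌋}
      = ENNReal.ofReal (max 0 (1 - |s - s'| / w)) := by
  wlog hss : s ≤ s' generalizing s s'
  · have hswap : {b : ℝ | ⌊(s + b) / w⌋ = ⌊(s' + b) / w⌋}
        = {b : ℝ | ⌊(s' + b) / w⌋ = ⌊(s + b) / w⌋} := by
      ext b; exact ⟨Eq.symm, Eq.symm⟩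
    rw [hswap, abs_sub_comm]
    exact this s' s (le_of_not_ge hss)
  set t := s' - s with ht
  have ht0 : 0 ≤ t := by linarith
  have habs : |s - s'| = t := by rw [abs_sub_comm, abs_of_nonneg ht0]
  have hev : {b : ℝ | ⌊(s + b) / w⌋ = ⌊(s' + b) / w⌋}
      = {b : ℝ | Int.fract (s / w + b / w) < 1 - t / w} := by
    ext b
    have h1 : (s' + b) / w = (s + b) / w + t / w := by
      rw [ht, ← add_div]
      ring_nf
    have h2 : (s + b) / w = s / w + b / w := add_div s b w
    rw [Set.mem_setOf_eq, Set.mem_setOf_eq, h1, ← h2]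
    exact floor_eq_floor_iff (div_nonneg ht0 hw.le)
  rw [hev, Measure.smul_apply, Measure.restrict_apply' measurableSet_Icc,
    fract_lt_volume w hw (s / w) (1 - t / w)
      (by have : 0 ≤ t / w := div_nonneg ht0 hw.le; linarith),
    smul_eq_mul, ← ENNReal.ofReal_mul (by positivity), habs]
  congr 1
  rw [← mul_assoc, inv_mul_cancel₀ hw.ne', one_mul]
end GaussLSH

/-- For the hash `h(x) = ⌊(v·x + b)/w⌋` where `v` has i.i.d. standard Gaussian
entries and `b` is uniform on `[0,w]` (independent of `v`), the collision
probability `Pr(h(x) = h(x'))` is a monotonically decreasing function of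
`‖x − x'‖₂`; in particular it equals 1 when `‖x − x'‖₂ = 0`. -/
theorem gaussian_lsh_collision_probability_antitone
    (d : ℕ) (w : ℝ) (hw : 0 < w) :
    ∃ f : ℝ → ℝ,
      AntitoneOn f (Set.Ici 0) ∧ f 0 = 1 ∧
      ∀ x x' : Fin d → ℝ,
        (((Measure.pi fun _ : Fin d => gaussianReal 0 1).prod
            (ENNReal.ofReal w⁻¹ • volume.restrict (Set.Icc (0 : ℝ) w)))
          {p : (Fin d → ℝ) × ℝ |
            ⌊((∑ i, p.1 i * x i) + p.2) / w⌋ =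
              ⌊((∑ i, p.1 i * x' i) + p.2) / w⌋}).toReal
          = f (Real.sqrt (∑ i, (x i - x' i) ^ 2)) := by
  classical
  set F : ℝ → ℝ≥0∞ := fun z => ENNReal.ofReal (max 0 (1 - |z| / w)) with hF
  have hFm : Measurable F :=
    ENNReal.measurable_ofReal.comp
      (continuous_const.max (continuous_const.sub (continuous_abs.div_const w))).measurable
  have hF1 : ∀ z, F z ≤ 1 := by
    intro z
    rw [hF]
    refine ENNReal.ofReal_le_one.mpr (max_le zero_le_one ?_)
    have : 0 ≤ |z| / w := div_nonneg (abs_nonneg z) hw.le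
    linarith
  have hint_le_one : ∀ m : Measure ℝ, IsProbabilityMeasure m → (∫⁻ z, F z ∂m) ≤ 1 := by
    intro m hm
    calc (∫⁻ z, F z ∂m) ≤ ∫⁻ _, 1 ∂m := lintegral_mono hF1
      _ = 1 := by rw [lintegral_one, measure_univ]
  refine ⟨fun r => (∫⁻ z, F z ∂(gaussianReal 0 ⟨r ^ 2, sq_nonneg r⟩)).toReal, ?_, ?_, ?_⟩
  · -- antitone
    intro r1 hr1 r2 hr2 h12
    simp only [Set.mem_Ici] at hr1 hr2
    have hmap : ∀ r : ℝ, (∫⁻ z, F z ∂(gaussianReal 0 ⟨r ^ 2, sq_nonneg r⟩))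
        = ∫⁻ z, F (r * z) ∂(gaussianReal 0 1) := by
      intro r
      have : gaussianReal 0 (⟨r ^ 2, sq_nonneg r⟩ : ℝ≥0)
          = (gaussianReal 0 1).map (r * ·) := by
        rw [gaussianReal_map_const_mul]
        congr 1
        · simp
        · rw [mul_one]
          rfl
      rw [this, lintegral_map hFm (measurable_const_mul r)]
    apply ENNReal.toReal_mono
    · exact ne_top_of_le_ne_top ENNReal.one_ne_top
        (hint_le_one _ (instIsProbabilityMeasureGaussianReal _ _))
    · rw [hmap r1, hmap r2]
      refine lintegral_mono fun z => ?_
      have habs : |r1 * z| ≤ |r2 * z| := by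
        rw [abs_mul, abs_mul]
        exact mul_le_mul_of_nonneg_right
          (by rwa [abs_of_nonneg hr1, abs_of_nonneg (hr1.trans h12)]) (abs_nonneg z)
      refine ENNReal.ofReal_le_ofReal (max_le_max le_rfl ?_)
      gcongr
  · -- f 0 = 1
    show (∫⁻ z, F z ∂(gaussianReal 0 ⟨(0 : ℝ) ^ 2, sq_nonneg 0⟩)).toReal = 1
    have h0 : (⟨(0 : ℝ) ^ 2, sq_nonneg 0⟩ : ℝ≥0) = (0 : ℝ≥0) := by ext; norm_num
    rw [h0, gaussianReal_zero_var, lintegral_dirac]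
    rw [hF]
    norm_num
  · -- main formula
    intro x x'
    set u : Fin d → ℝ := fun i => x i - x' i with hu
    have hTm : Measurable (fun v : Fin d → ℝ => ∑ i, v i * u i) :=
      Finset.measurable_sum _ fun i _ => (measurable_pi_apply i).mul_const _
    have hs1 : Measurable (fun p : (Fin d → ℝ) × ℝ => ⌊((∑ i, p.1 i * x i) + p.2) / w⌋) :=
      Int.measurable_floor.comp
        (((Finset.measurable_sum _ fun i _ =>
          ((measurable_pi_apply i).comp measurable_fst).mul_const _).add
            measurable_snd).div_const w)
    have hs2 : Measurable (fun p : (Fin d → ℝ) × ℝ => ⌊((∑ i, p.1 i * x' i) + p.2) / w⌋) :=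
      Int.measurable_floor.comp
        (((Finset.measurable_sum _ fun i _ =>
          ((measurable_pi_apply i).comp measurable_fst).mul_const _).add
            measurable_snd).div_const w)
    have hA : MeasurableSet {p : (Fin d → ℝ) × ℝ |
        ⌊((∑ i, p.1 i * x i) + p.2) / w⌋ = ⌊((∑ i, p.1 i * x' i) + p.2) / w⌋} :=
      GaussLSH.measurableSet_eq_int hs1 hs2
    have hfin : IsFiniteMeasure (ENNReal.ofReal w⁻¹ • volume.restrict (Set.Icc (0 : ℝ) w)) := by
      constructor
      rw [Measure.smul_apply, Measure.restrict_apply MeasurableSet.univ, Set.univ_inter,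
        Real.volume_Icc, smul_eq_mul]
      exact ENNReal.mul_lt_top ENNReal.ofReal_lt_top ENNReal.ofReal_lt_top
    rw [Measure.prod_apply hA]
    have hsec : (fun v : Fin d → ℝ =>
        (ENNReal.ofReal w⁻¹ • volume.restrict (Set.Icc (0 : ℝ) w))
          (Prod.mk v ⁻¹' {p : (Fin d → ℝ) × ℝ |
            ⌊((∑ i, p.1 i * x i) + p.2) / w⌋ = ⌊((∑ i, p.1 i * x' i) + p.2) / w⌋}))
        = fun v => F (∑ i, v i * u i) := by
      funext v
      have hpre : Prod.mk v ⁻¹' {p : (Fin d → ℝ) × ℝ |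
          ⌊((∑ i, p.1 i * x i) + p.2) / w⌋ = ⌊((∑ i, p.1 i * x' i) + p.2) / w⌋}
          = {b : ℝ | ⌊((∑ i, v i * x i) + b) / w⌋ = ⌊((∑ i, v i * x' i) + b) / w⌋} := rfl
      rw [hpre, GaussLSH.b_section w hw]
      have hdiff : (∑ i, v i * x i) - (∑ i, v i * x' i) = ∑ i, v i * u i := by
        rw [← Finset.sum_sub_distrib]
        exact Finset.sum_congr rfl fun i _ => by rw [hu]; ring
      rw [hdiff, hF]
    rw [hsec, ← lintegral_map hFm hTm, GaussLSH.pi_map_lin d u]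
    show (∫⁻ z, F z ∂(gaussianReal 0 ⟨∑ i, u i ^ 2, by positivity⟩)).toReal
      = (∫⁻ z, F z ∂(gaussianReal 0
          ⟨(Real.sqrt (∑ i, (x i - x' i) ^ 2)) ^ 2,
            sq_nonneg (Real.sqrt (∑ i, (x i - x' i) ^ 2))⟩)).toReal
    congr 3
    ext
    change ∑ i, u i ^ 2 = (Real.sqrt (∑ i, (x i - x' i) ^ 2)) ^ 2
    rw [Real.sq_sqrt (by positivity)]
end
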